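/- For every τ in the upper half plane ℍ, writing e(w) = e^{2πiw}, the following two infinite product identities hold: (i) ∏_{n=1}^∞ (1 − e(nτ)) · ∏_{n=1}^∞ (1 + e((n − 1/2)τ)) = ∏_{n=1}^∞ (1 − e(n·(τ+1)/2)); (ii) ∏_{n=1}^∞ (1 + e((n − 1/2)τ)) · ∏_{n=1}^∞ (1 + e(nτ)) · ∏_{n=1}^∞ (1 − e((n − 1/2)τ)) = 1. All products converge absolutely since |e(τ)| < 1. -/

import Mathlib

open Complex

/-- `e(w) = e^{2πiw}`. -/
noncomputable def ec (w : ℂ) : ℂ := Complex.exp (2 * Real.pi * Complex.I * w)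

lemma ec_pow (w : ℂ) (k : ℕ) : ec ((k : ℂ) * w) = ec w ^ k := by
  unfold ec
  rw [← Complex.exp_nat_mul]
  ring_nf

lemma ec_add (a b : ℂ) : ec (a + b) = ec a * ec b := by
  unfold ec
  rw [← Complex.exp_add]
  ring_nf

lemma summable_log_one_add (a : ℕ → ℂ) (ha : Summable a) :
    Summable fun n ↦ Complex.log (1 + a n) := by
  have h0 : Filter.Tendsto a Filter.atTop (nhds 0) := ha.tendsto_atTop_zero
  have hev : ∀ᶠ n in Filter.atTop, ‖Complex.log (1 + a n)‖ ≤ (3/2) * ‖a n‖ := by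
    have hsmall : ∀ᶠ n in Filter.atTop, ‖a n‖ ≤ 1/2 := by
      have h' := h0.norm
      simp only [norm_zero] at h'
      exact h'.eventually_le_const (by norm_num)
    filter_upwards [hsmall] with n hn
    exact Complex.norm_log_one_add_half_le_self hn
  exact Summable.of_norm_bounded_eventually_nat (ha.norm.mul_left (3/2)) hev

lemma one_add_ne_zero' {z : ℂ} (h : ‖z‖ < 1) : 1 + z ≠ 0 := by
  intro hz
  have h2 : z = -1 := by linear_combination hz
  rw [h2] at h
  simp at h

lemma multipliable_one_add (a : ℕ → ℂ) (ha : Summable a) (h1 : ∀ n, ‖a n‖ < 1) :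
    Multipliable fun n ↦ 1 + a n :=
  Complex.multipliable_of_summable_log (summable_log_one_add a ha)

lemma tprod_one_add_ne_zero (a : ℕ → ℂ) (ha : Summable a) (h1 : ∀ n, ‖a n‖ < 1) :
    (∏' n : ℕ, (1 + a n)) ≠ 0 := by
  have heq := Complex.cexp_tsum_eq_tprod (f := fun n ↦ 1 + a n)
    (fun n ↦ one_add_ne_zero' (h1 n)) (summable_log_one_add a ha)
  rw [← heq]
  exact Complex.exp_ne_zero _

lemma summable_cw (c w : ℂ) (hw : ‖w‖ < 1) : Summable fun n : ℕ ↦ c * w ^ n :=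
  (summable_geometric_of_norm_lt_one hw).mul_left c

lemma norm_cw_lt_one (c w : ℂ) (hc : ‖c‖ < 1) (hw : ‖w‖ < 1) (n : ℕ) :
    ‖c * w ^ n‖ < 1 := by
  rw [norm_mul, norm_pow]
  calc ‖c‖ * ‖w‖ ^ n ≤ ‖c‖ * 1 := by
        apply mul_le_mul_of_nonneg_left _ (norm_nonneg c)
        exact pow_le_one₀ (norm_nonneg w) hw.le
    _ < 1 := by simpa using hc

lemma aux_mult {c w : ℂ} (hc : ‖c‖ < 1) (hw : ‖w‖ < 1) :
    Multipliable (fun n : ℕ ↦ 1 + c * w ^ n) :=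
  multipliable_one_add _ (summable_cw c w hw) (norm_cw_lt_one c w hc hw)

lemma aux_ne {c w : ℂ} (hc : ‖c‖ < 1) (hw : ‖w‖ < 1) :
    (∏' n : ℕ, (1 + c * w ^ n)) ≠ 0 :=
  tprod_one_add_ne_zero _ (summable_cw c w hw) (norm_cw_lt_one c w hc hw)

theorem infinite_product_identities (τ : ℂ) (hτ : 0 < τ.im) :
    ((∏' n : ℕ, (1 - ec (((n : ℂ) + 1) * τ))) *
      ∏' n : ℕ, (1 + ec (((n : ℂ) + 1 - 1 / 2) * τ))) =
      (∏' n : ℕ, (1 - ec (((n : ℂ) + 1) * ((τ + 1) / 2)))) ∧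
    ((∏' n : ℕ, (1 + ec (((n : ℂ) + 1 - 1 / 2) * τ))) *
      (∏' n : ℕ, (1 + ec (((n : ℂ) + 1) * τ))) *
      ∏' n : ℕ, (1 - ec (((n : ℂ) + 1 - 1 / 2) * τ))) = 1 := by
  set q : ℂ := ec (τ / 2) with hqdef
  have hqn : ‖q‖ < 1 := by
    rw [hqdef]
    unfold ec
    rw [Complex.norm_exp]
    have hre : (2 * (Real.pi : ℂ) * Complex.I * (τ / 2)).re = -(Real.pi * τ.im) := by
      simp [Complex.mul_re, Complex.mul_im]
      ring
    rw [hre]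
    have hlt : -(Real.pi * τ.im) < 0 := by
      have := Real.pi_pos
      nlinarith
    calc Real.exp (-(Real.pi * τ.im)) < Real.exp 0 := Real.exp_lt_exp.mpr hlt
      _ = 1 := Real.exp_zero
  have hqnn : (0:ℝ) ≤ ‖q‖ := norm_nonneg q
  have hq2 : ‖q ^ 2‖ < 1 := by
    rw [norm_pow]; exact pow_lt_one₀ hqnn hqn (by norm_num)
  have hq4 : ‖q ^ 4‖ < 1 := by
    rw [norm_pow]; exact pow_lt_one₀ hqnn hqn (by norm_num)
  have hnegq : ‖-q‖ < 1 := by rwa [norm_neg]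
  have hnq2 : ‖-(q ^ 2)‖ < 1 := by rwa [norm_neg]
  have hnq4 : ‖-(q ^ 4)‖ < 1 := by rwa [norm_neg]
  -- powers of q
  have p1 : ∀ k : ℕ, (q ^ 2) ^ (2 * k) = (q ^ 4) ^ k := by
    intro k
    rw [← pow_mul, ← pow_mul]
    congr 1
    ring
  have p2 : ∀ k : ℕ, (q ^ 2) ^ (2 * k + 1) = q ^ 2 * (q ^ 4) ^ k := by
    intro k
    rw [pow_succ, p1 k]
    ring
  have psq : ∀ n : ℕ, ((q ^ 2) ^ n) ^ 2 = (q ^ 4) ^ n := by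
    intro n
    rw [← pow_mul, ← pow_mul, ← pow_mul]
    congr 1
    ring
  -- rewrite the `ec` values as powers of q
  have e1 : ∀ n : ℕ, ec (((n : ℂ) + 1) * τ) = q ^ (2 * n + 2) := by
    intro n
    rw [hqdef, ← ec_pow (τ / 2) (2 * n + 2)]
    congr 1
    push_cast
    ring
  have e2 : ∀ n : ℕ, ec (((n : ℂ) + 1 - 1 / 2) * τ) = q ^ (2 * n + 1) := by
    intro n
    rw [hqdef, ← ec_pow (τ / 2) (2 * n + 1)]
    congr 1
    push_cast
    ring
  have ehalf : ec (1 / 2 : ℂ) = -1 := by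
    unfold ec
    rw [show 2 * (Real.pi : ℂ) * Complex.I * (1 / 2) = Real.pi * Complex.I by ring]
    exact Complex.exp_pi_mul_I
  have e3 : ∀ n : ℕ, ec (((n : ℂ) + 1) * ((τ + 1) / 2)) = (-q) ^ (n + 1) := by
    intro n
    have hsum : ((n : ℂ) + 1) * ((τ + 1) / 2)
        = ((n + 1 : ℕ) : ℂ) * (τ / 2) + ((n + 1 : ℕ) : ℂ) * (1 / 2 : ℂ) := by
      push_cast
      ring
    rw [hsum, ec_add, ec_pow, ec_pow, ← hqdef, ehalf, neg_pow, neg_pow]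
    ring
  -- rewrite the five tprods
  have T1 : (∏' n : ℕ, (1 - ec (((n : ℂ) + 1) * τ)))
      = ∏' n : ℕ, (1 + (-(q ^ 2)) * (q ^ 2) ^ n) := by
    refine tprod_congr fun n ↦ ?_
    rw [e1 n, pow_add, pow_mul]
    ring
  have T2 : (∏' n : ℕ, (1 + ec (((n : ℂ) + 1 - 1 / 2) * τ)))
      = ∏' n : ℕ, (1 + q * (q ^ 2) ^ n) := by
    refine tprod_congr fun n ↦ ?_
    rw [e2 n, pow_add, pow_mul]
    ring
  have T4 : (∏' n : ℕ, (1 + ec (((n : ℂ) + 1) * τ)))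
      = ∏' n : ℕ, (1 + (q ^ 2) * (q ^ 2) ^ n) := by
    refine tprod_congr fun n ↦ ?_
    rw [e1 n, pow_add, pow_mul]
    ring
  have T5 : (∏' n : ℕ, (1 - ec (((n : ℂ) + 1 - 1 / 2) * τ)))
      = ∏' n : ℕ, (1 + (-q) * (q ^ 2) ^ n) := by
    refine tprod_congr fun n ↦ ?_
    rw [e2 n, pow_add, pow_mul]
    ring
  have T3 : (∏' n : ℕ, (1 - ec (((n : ℂ) + 1) * ((τ + 1) / 2))))
      = ∏' n : ℕ, (1 + q * (-q) ^ n) := by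
    refine tprod_congr fun n ↦ ?_
    rw [e3 n, pow_succ]
    ring
  rw [T1, T2, T3, T4, T5]
  constructor
  · -- part (i)
    have mE : Multipliable (fun k : ℕ ↦ 1 + q * (-q) ^ (2 * k)) :=
      (aux_mult hqn hq2).congr (fun k ↦ by
        show 1 + q * (q ^ 2) ^ k = 1 + q * (-q) ^ (2 * k)
        rw [pow_mul, neg_sq])
    have mO : Multipliable (fun k : ℕ ↦ 1 + q * (-q) ^ (2 * k + 1)) :=
      (aux_mult hnq2 hq2).congr (fun k ↦ by
        show 1 + -(q ^ 2) * (q ^ 2) ^ k = 1 + q * (-q) ^ (2 * k + 1)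
        rw [pow_succ (-q) (2 * k), pow_mul, neg_sq]
        ring)
    have hsplit : (∏' k : ℕ, (1 + q * (-q) ^ (2 * k))) *
          (∏' k : ℕ, (1 + q * (-q) ^ (2 * k + 1))) = ∏' n : ℕ, (1 + q * (-q) ^ n) :=
      tprod_even_mul_odd (f := fun n : ℕ ↦ 1 + q * (-q) ^ n) mE mO
    have he : (∏' k : ℕ, (1 + q * (-q) ^ (2 * k))) = ∏' k : ℕ, (1 + q * (q ^ 2) ^ k) :=
      tprod_congr fun k ↦ by rw [pow_mul, neg_sq]
    have ho : (∏' k : ℕ, (1 + q * (-q) ^ (2 * k + 1)))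
        = ∏' k : ℕ, (1 + -(q ^ 2) * (q ^ 2) ^ k) :=
      tprod_congr fun k ↦ by
        rw [pow_succ (-q) (2 * k), pow_mul, neg_sq]
        ring
    rw [he, ho] at hsplit
    rw [← hsplit]
    ring
  · -- part (ii)
    have S1 : (∏' n : ℕ, (1 + q * (q ^ 2) ^ n)) * (∏' n : ℕ, (1 + (-q) * (q ^ 2) ^ n))
        = ∏' n : ℕ, (1 + (-(q ^ 2)) * (q ^ 4) ^ n) := by
      rw [← Multipliable.tprod_mul (aux_mult hqn hq2) (aux_mult hnegq hq2)]
      refine tprod_congr fun n ↦ ?_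
      linear_combination (-(q ^ 2)) * psq n
    have S3 : (∏' n : ℕ, (1 + (q ^ 2) * (q ^ 2) ^ n)) *
          (∏' n : ℕ, (1 + (-(q ^ 2)) * (q ^ 2) ^ n))
        = ∏' n : ℕ, (1 + (-(q ^ 4)) * (q ^ 4) ^ n) := by
      rw [← Multipliable.tprod_mul (aux_mult hq2 hq2) (aux_mult hnq2 hq2)]
      refine tprod_congr fun n ↦ ?_
      linear_combination (-(q ^ 4)) * psq n
    have S2 : (∏' n : ℕ, (1 + (-(q ^ 2)) * (q ^ 2) ^ n))
        = (∏' k : ℕ, (1 + (-(q ^ 2)) * (q ^ 4) ^ k)) *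
          ∏' k : ℕ, (1 + (-(q ^ 4)) * (q ^ 4) ^ k) := by
      have mE : Multipliable (fun k : ℕ ↦ 1 + (-(q ^ 2)) * (q ^ 2) ^ (2 * k)) :=
        (aux_mult hnq2 hq4).congr (fun k ↦ by
          show 1 + -(q ^ 2) * (q ^ 4) ^ k = 1 + -(q ^ 2) * (q ^ 2) ^ (2 * k)
          rw [p1 k])
      have mO : Multipliable (fun k : ℕ ↦ 1 + (-(q ^ 2)) * (q ^ 2) ^ (2 * k + 1)) :=
        (aux_mult hnq4 hq4).congr (fun k ↦ by
          show 1 + -(q ^ 4) * (q ^ 4) ^ k = 1 + -(q ^ 2) * (q ^ 2) ^ (2 * k + 1)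
          rw [p2 k]
          ring)
      have hsplit : (∏' k : ℕ, (1 + (-(q ^ 2)) * (q ^ 2) ^ (2 * k))) *
            (∏' k : ℕ, (1 + (-(q ^ 2)) * (q ^ 2) ^ (2 * k + 1)))
          = ∏' n : ℕ, (1 + (-(q ^ 2)) * (q ^ 2) ^ n) :=
        tprod_even_mul_odd (f := fun n : ℕ ↦ 1 + (-(q ^ 2)) * (q ^ 2) ^ n) mE mO
      rw [← hsplit]
      congr 1
      · exact tprod_congr fun k ↦ by rw [p1 k]
      · refine tprod_congr fun k ↦ ?_
        rw [p2 k]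
        ring
    have Dne : (∏' n : ℕ, (1 + (-(q ^ 2)) * (q ^ 2) ^ n)) ≠ 0 := aux_ne hnq2 hq2
    have key : ((∏' n : ℕ, (1 + q * (q ^ 2) ^ n)) *
          (∏' n : ℕ, (1 + (q ^ 2) * (q ^ 2) ^ n)) *
          ∏' n : ℕ, (1 + (-q) * (q ^ 2) ^ n)) *
          (∏' n : ℕ, (1 + (-(q ^ 2)) * (q ^ 2) ^ n))
        = 1 * (∏' n : ℕ, (1 + (-(q ^ 2)) * (q ^ 2) ^ n)) := by
      rw [one_mul]
      calc ((∏' n : ℕ, (1 + q * (q ^ 2) ^ n)) *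
          (∏' n : ℕ, (1 + (q ^ 2) * (q ^ 2) ^ n)) *
          ∏' n : ℕ, (1 + (-q) * (q ^ 2) ^ n)) *
          (∏' n : ℕ, (1 + (-(q ^ 2)) * (q ^ 2) ^ n))
          = ((∏' n : ℕ, (1 + q * (q ^ 2) ^ n)) * (∏' n : ℕ, (1 + (-q) * (q ^ 2) ^ n))) *
            ((∏' n : ℕ, (1 + (q ^ 2) * (q ^ 2) ^ n)) *
             (∏' n : ℕ, (1 + (-(q ^ 2)) * (q ^ 2) ^ n))) := by ring
        _ = (∏' n : ℕ, (1 + (-(q ^ 2)) * (q ^ 4) ^ n)) *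
            ∏' n : ℕ, (1 + (-(q ^ 4)) * (q ^ 4) ^ n) := by rw [S1, S3]
        _ = ∏' n : ℕ, (1 + (-(q ^ 2)) * (q ^ 2) ^ n) := S2.symm
    exact mul_right_cancel₀ Dne key
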